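/- Extended balancing-score unconfoundedness (the conditional independence step in Section 2.3): if A and (Y0, Y1) are conditionally independent given σ(X), and π : S → ℝ is a measurable function such that π ∘ X is a version of E[A | σ(X)], then for any measurable g : S → ℝ, the treatment A and the pair (Y0, Y1) are conditionally independent given the σ-algebra σ(g ∘ X, π ∘ X) generated by the pair (g(X), π(X)). -/

import Mathlib

open MeasureTheory ProbabilityTheory

/-- Auxiliary: the whole argument with abstract sub-σ-algebras `mG ≤ mX ≤ inst`. -/
theorem aux_extended_balancing
    {Ω : Type*} {mX mG : MeasurableSpace Ω} [inst : MeasurableSpace Ω]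
    [StandardBorelSpace Ω] {μ : Measure Ω} [IsProbabilityMeasure μ]
    (hX_le : mX ≤ inst) (hG_le : mG ≤ inst) (hGX : mG ≤ mX)
    (A : Ω → ℝ) (hAm : Measurable A) (hA01 : ∀ ω, A ω = 0 ∨ A ω = 1)
    (Y : Ω → ℝ × ℝ) (hYm : Measurable Y)
    (huncf : CondIndepFun mX hX_le A Y μ)
    (p : Ω → ℝ) (hpG : StronglyMeasurable[mG] p)
    (hpver : p =ᵐ[μ] μ[A | mX]) :
    CondIndepFun mG hG_le A Y μ := by
  have hp_int : Integrable p μ := integrable_condExp.congr hpver.symm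
  have hA_ind : (A ⁻¹' {1}).indicator (fun _ => (1 : ℝ)) = A := by
    funext ω
    rcases hA01 ω with h | h <;> simp [Set.indicator, Set.mem_preimage, h]
  have hπeqG : (μ⟦A ⁻¹' {1} | mG⟧) =ᵐ[μ] p := by
    rw [hA_ind]
    calc μ[A | mG] =ᵐ[μ] μ[μ[A | mX] | mG] := (condExp_condExp_of_le hGX hX_le).symm
      _ =ᵐ[μ] μ[p | mG] := condExp_congr_ae hpver.symm
      _ = p := condExp_of_stronglyMeasurable hG_le hpG hp_int
  rw [condIndepFun_iff_condExp_inter_preimage_eq_mul (μ := μ) (m' := mX) (hm' := hX_le) hAm hYm] at huncf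
  rw [condIndepFun_iff_condExp_inter_preimage_eq_mul (μ := μ) (m' := mG) (hm' := hG_le) hAm hYm]
  have key : ∀ t : Set (ℝ × ℝ), MeasurableSet t →
      (μ⟦A ⁻¹' {1} ∩ Y ⁻¹' t | mG⟧) =ᵐ[μ]
        fun ω => (μ⟦A ⁻¹' {1} | mG⟧) ω * (μ⟦Y ⁻¹' t | mG⟧) ω := by
    intro t ht
    have h1 : (μ⟦A ⁻¹' {1} ∩ Y ⁻¹' t | mX⟧) =ᵐ[μ]
        fun ω => p ω * (μ⟦Y ⁻¹' t | mX⟧) ω := by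
      have h0 := huncf {1} t (measurableSet_singleton 1) ht
      have hAx : (μ⟦A ⁻¹' {1} | mX⟧) =ᵐ[μ] p := by
        rw [hA_ind]; exact hpver.symm
      filter_upwards [h0, hAx] with ω h0ω hAxω
      rw [h0ω, hAxω]
    have hint1 : Integrable (fun ω => p ω * (μ⟦Y ⁻¹' t | mX⟧) ω) μ :=
      integrable_condExp.congr h1
    calc (μ⟦A ⁻¹' {1} ∩ Y ⁻¹' t | mG⟧)
        =ᵐ[μ] μ[μ⟦A ⁻¹' {1} ∩ Y ⁻¹' t | mX⟧ | mG] := (condExp_condExp_of_le hGX hX_le).symm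
      _ =ᵐ[μ] μ[(fun ω => p ω * (μ⟦Y ⁻¹' t | mX⟧) ω) | mG] := condExp_congr_ae h1
      _ =ᵐ[μ] p * μ[μ⟦Y ⁻¹' t | mX⟧ | mG] :=
          condExp_mul_of_stronglyMeasurable_left hpG hint1 integrable_condExp
      _ =ᵐ[μ] fun ω => (μ⟦A ⁻¹' {1} | mG⟧) ω * (μ⟦Y ⁻¹' t | mG⟧) ω := by
          filter_upwards [condExp_condExp_of_le hGX hX_le
            (f := (Y ⁻¹' t).indicator fun _ => (1:ℝ)), hπeqG] with ω h5 h6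
          simp only [Pi.mul_apply]
          rw [h5, h6]
  intro s t hs ht
  have htB : MeasurableSet (Y ⁻¹' t) := hYm ht
  by_cases h1s : (1 : ℝ) ∈ s <;> by_cases h0s : (0 : ℝ) ∈ s
  · have hAs : A ⁻¹' s = Set.univ := by
      ext ω; simp only [Set.mem_preimage, Set.mem_univ, iff_true]
      rcases hA01 ω with h | h <;> rw [h] <;> assumption
    have hone : (μ⟦(Set.univ : Set Ω) | mG⟧) = fun _ => (1 : ℝ) := by
      rw [Set.indicator_univ]; exact condExp_const hG_le (1 : ℝ)
    rw [hAs, Set.univ_inter, hone]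
    filter_upwards with ω
    simp
  · have hAs : A ⁻¹' s = A ⁻¹' {1} := by
      ext ω; simp only [Set.mem_preimage, Set.mem_singleton_iff]
      rcases hA01 ω with h | h <;> rw [h] <;> simp [h0s, h1s]
    rw [hAs]
    exact key t ht
  · have hAs : A ⁻¹' s = (A ⁻¹' {1})ᶜ := by
      ext ω; simp only [Set.mem_preimage, Set.mem_compl_iff, Set.mem_singleton_iff]
      rcases hA01 ω with h | h <;> rw [h] <;> simp [h0s, h1s]
    rw [hAs]
    have hdiff : (((A ⁻¹' {1})ᶜ ∩ Y ⁻¹' t).indicator fun _ => (1 : ℝ)) =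
        ((Y ⁻¹' t).indicator fun _ => (1 : ℝ)) -
          ((A ⁻¹' {1} ∩ Y ⁻¹' t).indicator fun _ => (1 : ℝ)) := by
      funext ω
      by_cases hω : ω ∈ A ⁻¹' {1} <;> by_cases hωB : ω ∈ Y ⁻¹' t <;>
        simp [Set.indicator, hω, hωB]
    have hcdiff : ((A ⁻¹' {1})ᶜ).indicator (fun _ => (1 : ℝ)) =
        (fun _ => (1 : ℝ)) - (A ⁻¹' {1}).indicator (fun _ => (1 : ℝ)) := by
      funext ω
      by_cases hω : ω ∈ A ⁻¹' {1} <;> simp [Set.indicator, hω]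
    have hIB : Integrable ((Y ⁻¹' t).indicator fun _ => (1 : ℝ)) μ :=
      (integrable_const (1 : ℝ)).indicator htB
    have hIAB : Integrable ((A ⁻¹' {1} ∩ Y ⁻¹' t).indicator fun _ => (1 : ℝ)) μ :=
      (integrable_const (1 : ℝ)).indicator ((hAm (measurableSet_singleton 1)).inter htB)
    have hIA : Integrable ((A ⁻¹' {1}).indicator fun _ => (1 : ℝ)) μ :=
      (integrable_const (1 : ℝ)).indicator (hAm (measurableSet_singleton 1))
    have e1 : (μ⟦(A ⁻¹' {1})ᶜ ∩ Y ⁻¹' t | mG⟧) =ᵐ[μ]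
        (μ⟦Y ⁻¹' t | mG⟧) - (μ⟦A ⁻¹' {1} ∩ Y ⁻¹' t | mG⟧) := by
      rw [hdiff]; exact condExp_sub hIB hIAB mG
    have e2 : (μ⟦(A ⁻¹' {1})ᶜ | mG⟧) =ᵐ[μ]
        (fun _ => (1 : ℝ)) - (μ⟦A ⁻¹' {1} | mG⟧) := by
      rw [hcdiff]
      refine (condExp_sub (integrable_const 1) hIA mG).trans ?_
      rw [condExp_const hG_le (1 : ℝ)]
    filter_upwards [e1, e2, key t ht] with ω he1 he2 hkey
    rw [he1, he2]
    simp only [Pi.sub_apply] at *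
    rw [hkey]
    ring
  · have hAs : A ⁻¹' s = ∅ := by
      ext ω; simp only [Set.mem_preimage, Set.mem_empty_iff_false, iff_false]
      rcases hA01 ω with h | h <;> rw [h] <;> assumption
    rw [hAs, Set.empty_inter]
    have h0 : (μ⟦(∅ : Set Ω) | mG⟧) = 0 := by
      rw [Set.indicator_empty]; exact condExp_zero
    rw [h0]
    filter_upwards with ω
    simp

/-- Extended balancing-score unconfoundedness: if `A ⟂ (Y0, Y1) | σ(X)` and
`π ∘ X` is a version of `E[A | σ(X)]`, then for any measurable `g : S → ℝ`, `A` and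
`(Y0, Y1)` are conditionally independent given the σ-algebra generated by
`(g(X), π(X))`. -/
theorem extended_balancing_score_unconfoundedness
    {Ω : Type*} [MeasurableSpace Ω] [StandardBorelSpace Ω]
    {S : Type*} [MeasurableSpace S]
    (μ : Measure Ω) [IsProbabilityMeasure μ]
    (A : Ω → ℝ) (hAm : Measurable A) (hA01 : ∀ ω, A ω = 0 ∨ A ω = 1)
    (X : Ω → S) (hXm : Measurable X)
    (Y0 Y1 : Ω → ℝ) (hY0m : Measurable Y0) (hY1m : Measurable Y1)
    (huncf : CondIndepFun (MeasurableSpace.comap X inferInstance) (hXm.comap_le)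
      A (fun ω => (Y0 ω, Y1 ω)) μ)
    (π : S → ℝ) (hπm : Measurable π)
    (hπver : (fun ω => π (X ω)) =ᵐ[μ] μ[A | MeasurableSpace.comap X inferInstance])
    (g : S → ℝ) (hg : Measurable g) :
    CondIndepFun (MeasurableSpace.comap (fun ω => (g (X ω), π (X ω))) inferInstance)
      (((hg.comp hXm).prodMk (hπm.comp hXm)).comap_le)
      A (fun ω => (Y0 ω, Y1 ω)) μ := by
  have hGX : MeasurableSpace.comap (fun ω => (g (X ω), π (X ω))) inferInstance ≤
      MeasurableSpace.comap X inferInstance := by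
    have : (fun ω => (g (X ω), π (X ω))) = (fun s => (g s, π s)) ∘ X := rfl
    rw [this, ← MeasurableSpace.comap_comp]
    exact MeasurableSpace.comap_mono (hg.prodMk hπm).comap_le
  have hpG : StronglyMeasurable[MeasurableSpace.comap (fun ω => (g (X ω), π (X ω)))
      inferInstance] (fun ω => π (X ω)) := by
    have hpair := @comap_measurable Ω (ℝ × ℝ) inferInstance (fun ω => (g (X ω), π (X ω)))
    exact (measurable_snd.comp hpair).stronglyMeasurable
  exact aux_extended_balancing hXm.comap_le
    (((hg.comp hXm).prodMk (hπm.comp hXm)).comap_le) hGX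
    A hAm hA01 _ (hY0m.prodMk hY1m) huncf (fun ω => π (X ω)) hpG hπver
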